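/- Fix t ≥ 2 and let 2 ≤ τ ≤ t. On W = (ℂ²)^{⊗t} ⊗ (ℂ²)^{⊗t} the identity G^z_τ · G^x_τ · J_{τ−1} · G^x_τ = G^z_τ · G^x_τ · G^z_{τ−1} holds. -/

import Mathlib

noncomputable section
open Complex Matrix Finset
open scoped Kronecker

abbrev QOp (ι : Type) := Matrix (ι → Fin 2) (ι → Fin 2) ℂ

def pauliX : Matrix (Fin 2) (Fin 2) ℂ := !![0, 1; 1, 0]
def pauliZ : Matrix (Fin 2) (Fin 2) ℂ := !![1, 0; 0, -1]

/-- Single-site operator `M` acting on site `j` (identity elsewhere). -/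
def site {ι : Type} [DecidableEq ι] [Fintype ι] (M : Matrix (Fin 2) (Fin 2) ℂ) (j : ι) :
    QOp ι :=
  Matrix.of fun x y => ∏ k, if k = j then M (x k) (y k) else if x k = y k then (1 : ℂ) else 0

/-- Matrix exponential. -/
abbrev mexp {ι : Type} [DecidableEq ι] [Fintype ι] (A : QOp ι) : QOp ι :=
  NormedSpace.exp A

/-- Operators on the doubled space `W = (ℂ²)^{⊗t} ⊗ (ℂ²)^{⊗t}`. -/
abbrev WOp (t : ℕ) :=
  Matrix ((Fin t → Fin 2) × (Fin t → Fin 2)) ((Fin t → Fin 2) × (Fin t → Fin 2)) ℂ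

/-- `G^a_τ = ½(1⊗1 + σ^a_τ ⊗ σ^a_τ)`; identity for site labels `τ ≤ 0` (1-based labels). -/
def GW (t : ℕ) (M : Matrix (Fin 2) (Fin 2) ℂ) (k : ℤ) : WOp t :=
  if hk : 1 ≤ k ∧ k ≤ (t : ℤ) then
    (1 / 2 : ℂ) • (1 + site M (⟨k.toNat - 1, by omega⟩ : Fin t) ⊗ₖ
      site M (⟨k.toNat - 1, by omega⟩ : Fin t))
  else 1

/-- `J_τ = exp(−i(π/4)σ^z_{τ+1}σ^z_τ) ⊗ exp(i(π/4)σ^z_{τ+1}σ^z_τ)`;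
identity outside `1 ≤ τ ≤ t−1`. -/
def JW (t : ℕ) (k : ℤ) : WOp t :=
  if hk : 1 ≤ k ∧ k + 1 ≤ (t : ℤ) then
    mexp ((-Complex.I) • (((Real.pi / 4 : ℝ) : ℂ) •
        (site pauliZ (⟨k.toNat, by omega⟩ : Fin t) *
          site pauliZ (⟨k.toNat - 1, by omega⟩ : Fin t)))) ⊗ₖ
      mexp (Complex.I • (((Real.pi / 4 : ℝ) : ℂ) •
        (site pauliZ (⟨k.toNat, by omega⟩ : Fin t) *
          site pauliZ (⟨k.toNat - 1, by omega⟩ : Fin t))))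
  else 1

/-- `Z^h_τ = exp(−ihσ^z_τ) ⊗ exp(ihσ^z_τ)`; identity for `τ ≤ 0`. -/
def ZW (t : ℕ) (h : ℝ) (k : ℤ) : WOp t :=
  if hk : 1 ≤ k ∧ k ≤ (t : ℤ) then
    mexp ((-Complex.I) • (((h : ℝ) : ℂ) • site pauliZ (⟨k.toNat - 1, by omega⟩ : Fin t))) ⊗ₖ
      mexp (Complex.I • (((h : ℝ) : ℂ) • site pauliZ (⟨k.toNat - 1, by omega⟩ : Fin t)))
  else 1

/-- `X_τ = exp(i(π/4)σ^x_τ) ⊗ exp(−i(π/4)σ^x_τ)`; identity for `τ ≤ 0`. -/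
def XW (t : ℕ) (k : ℤ) : WOp t :=
  if hk : 1 ≤ k ∧ k ≤ (t : ℤ) then
    mexp (Complex.I • (((Real.pi / 4 : ℝ) : ℂ) •
        site pauliX (⟨k.toNat - 1, by omega⟩ : Fin t))) ⊗ₖ
      mexp ((-Complex.I) • (((Real.pi / 4 : ℝ) : ℂ) •
        site pauliX (⟨k.toNat - 1, by omega⟩ : Fin t)))
  else 1

namespace GzAux

variable {ι : Type} [DecidableEq ι] [Fintype ι]

lemma delta_prod (x y : ι → Fin 2) :
    (∏ k, if x k = y k then (1:ℂ) else 0) = if x = y then 1 else 0 := by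
  by_cases h : x = y
  · subst h; simp
  · rw [if_neg h]
    obtain ⟨k, hk⟩ := Function.ne_iff.mp h
    exact Finset.prod_eq_zero (Finset.mem_univ k) (if_neg hk)

lemma site_one (j : ι) : site (1 : Matrix (Fin 2) (Fin 2) ℂ) j = 1 := by
  ext x y
  simp only [site, Matrix.of_apply, Matrix.one_apply]
  rw [← delta_prod x y]
  refine Finset.prod_congr rfl fun k _ => ?_
  split_ifs with h1 <;> simp [Matrix.one_apply]

lemma site_mul_same (M N : Matrix (Fin 2) (Fin 2) ℂ) (j : ι) :
    site M j * site N j = site (M * N) j := by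
  ext x y
  rw [Matrix.mul_apply]
  simp only [site, Matrix.of_apply]
  simp_rw [← Finset.prod_mul_distrib]
  rw [← Fintype.prod_sum (f := fun (k : ι) (a : Fin 2) =>
    (if k = j then M (x k) a else if x k = a then (1:ℂ) else 0) *
      (if k = j then N a (y k) else if a = y k then (1:ℂ) else 0))]
  refine Finset.prod_congr rfl fun k _ => ?_
  by_cases hk : k = j
  · subst hk; simp [Matrix.mul_apply]
  · simp only [if_neg hk]
    simp [ite_mul, Finset.sum_ite_eq]

lemma site_mul_apply (M N : Matrix (Fin 2) (Fin 2) ℂ) {j l : ι} (hjl : j ≠ l) (x y : ι → Fin 2) :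
    (site M j * site N l) x y =
      ∏ k, (if k = j then M (x k) (y k) else if k = l then N (x k) (y k)
        else if x k = y k then (1:ℂ) else 0) := by
  rw [Matrix.mul_apply]
  simp only [site, Matrix.of_apply]
  simp_rw [← Finset.prod_mul_distrib]
  rw [← Fintype.prod_sum (f := fun (k : ι) (a : Fin 2) =>
    (if k = j then M (x k) a else if x k = a then (1:ℂ) else 0) *
      (if k = l then N a (y k) else if a = y k then (1:ℂ) else 0))]
  refine Finset.prod_congr rfl fun k _ => ?_
  by_cases hk : k = j
  · subst hk
    simp [hjl, mul_ite, mul_one, mul_zero, Finset.sum_ite_eq']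
  · by_cases hl : k = l
    · subst hl
      simp [hk, ite_mul, one_mul, zero_mul, Finset.sum_ite_eq]
    · simp [hk, hl, ite_mul, mul_ite, Finset.sum_ite_eq]

lemma site_comm (M N : Matrix (Fin 2) (Fin 2) ℂ) {j l : ι} (hjl : j ≠ l) :
    site M j * site N l = site N l * site M j := by
  ext x y
  rw [site_mul_apply M N hjl, site_mul_apply N M hjl.symm]
  refine Finset.prod_congr rfl fun k _ => ?_
  by_cases hk : k = j
  · subst hk; rw [if_pos rfl, if_neg hjl, if_pos rfl]
  · by_cases hl : k = l
    · subst hl; rw [if_neg hk, if_pos rfl, if_pos rfl]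
    · rw [if_neg hk, if_neg hl, if_neg hl, if_neg hk]

lemma site_neg (M : Matrix (Fin 2) (Fin 2) ℂ) (j : ι) : site (-M) j = -(site M j) := by
  ext x y
  simp only [site, Matrix.of_apply, Matrix.neg_apply]
  rw [← Finset.mul_prod_erase Finset.univ _ (Finset.mem_univ j),
      ← Finset.mul_prod_erase Finset.univ _ (Finset.mem_univ j)]
  rw [if_pos rfl, if_pos rfl, neg_mul]
  congr 2
  exact Finset.prod_congr rfl fun k hk => by
    rw [if_neg (Finset.ne_of_mem_erase hk), if_neg (Finset.ne_of_mem_erase hk)]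

def zv : Fin 2 → ℂ := fun i => if i = 0 then 1 else -1

lemma pauliZ_apply (a b : Fin 2) : pauliZ a b = if a = b then zv a else 0 := by
  fin_cases a <;> fin_cases b <;> simp [pauliZ, zv]

lemma siteZ_diagonal (j : ι) : site pauliZ j = Matrix.diagonal (fun x => zv (x j)) := by
  ext x y
  by_cases h : x = y
  · subst h
    rw [Matrix.diagonal_apply_eq]
    have h1 : site pauliZ j x x = ∏ k : ι, (if k = j then pauliZ (x k) (x k) else 1) :=
      Finset.prod_congr rfl fun k _ => by by_cases hk : k = j <;> simp [hk]
    rw [h1, Finset.prod_ite_eq', if_pos (Finset.mem_univ j), pauliZ_apply, if_pos rfl]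
  · rw [Matrix.diagonal_apply_ne _ h]
    obtain ⟨k, hk⟩ := Function.ne_iff.mp h
    refine Finset.prod_eq_zero (Finset.mem_univ k) ?_
    by_cases hkj : k = j
    · rw [if_pos hkj, pauliZ_apply, if_neg hk]
    · rw [if_neg hkj, if_neg hk]


lemma mexp_smul_diag (c : ℂ) (w : (ι → Fin 2) → ℂ) (hw : ∀ x, w x = 1 ∨ w x = -1) :
    mexp (c • Matrix.diagonal w) =
      Complex.cosh c • 1 + Complex.sinh c • Matrix.diagonal w := by
  rw [mexp, ← Matrix.diagonal_smul, Matrix.exp_diagonal, Pi.exp_def,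
    ← Matrix.diagonal_one, ← Matrix.diagonal_smul, ← Matrix.diagonal_smul,
    Matrix.diagonal_add]
  refine congrArg Matrix.diagonal (funext fun x => ?_)
  simp only [Pi.smul_apply, smul_eq_mul, ← Complex.exp_eq_exp_ℂ]
  rcases hw x with h | h <;> rw [h]
  · rw [mul_one, mul_one, mul_one, Complex.cosh_add_sinh]
  · rw [show c * (-1) = -c by ring]
    rw [mul_one, mul_neg_one, ← sub_eq_add_neg, Complex.cosh_sub_sinh]

lemma kron_neg {m n : Type*} (A : Matrix m m ℂ) (B : Matrix n n ℂ) :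
    A ⊗ₖ (-B) = -(A ⊗ₖ B) := by
  ext x y
  simp [Matrix.kroneckerMap_apply]

lemma neg_kron {m n : Type*} (A : Matrix m m ℂ) (B : Matrix n n ℂ) :
    (-A) ⊗ₖ B = -(A ⊗ₖ B) := by
  ext x y
  simp [Matrix.kroneckerMap_apply]

lemma key {R : Type*} [Ring R] [Algebra ℂ R] (zz kk ss oa ao aa : R)
    (hkk : kk * kk = 1)
    (hzaa : zz * aa = ss) (hzss : zz * ss = aa)
    (hoa : kk * oa = -(oa * kk)) (hao : kk * ao = -(ao * kk))
    (haa : aa * kk = kk * aa) (hss : ss * kk = kk * ss) :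
    ((1/2:ℂ) • (1+zz)) * ((1/2:ℂ) • (1+kk)) *
      ((1/2:ℂ) • 1 + (Complex.I/2) • oa + (-(Complex.I/2)) • ao + (1/2:ℂ) • aa) *
      ((1/2:ℂ) • (1+kk)) =
    ((1/2:ℂ) • (1+zz)) * ((1/2:ℂ) • (1+kk)) * ((1/2:ℂ) • (1+ss)) := by
  have e1 : (1+kk) * oa * (1+kk) = 0 := by
    have h : (1+kk) * oa * (1+kk) = oa + oa*kk + kk*oa + kk*oa*kk := by noncomm_ring
    rw [h, hoa, neg_mul, mul_assoc, hkk, mul_one]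
    abel
  have e2 : (1+kk) * ao * (1+kk) = 0 := by
    have h : (1+kk) * ao * (1+kk) = ao + ao*kk + kk*ao + kk*ao*kk := by noncomm_ring
    rw [h, hao, neg_mul, mul_assoc, hkk, mul_one]
    abel
  have e3 : (1+kk) * aa * (1+kk) = (2:ℂ) • (aa * (1+kk)) := by
    have h : (1+kk) * aa * (1+kk) = aa + aa*kk + kk*aa + kk*aa*kk := by noncomm_ring
    rw [h, ← haa, mul_assoc, hkk, mul_one, two_smul]
    noncomm_ring
  have e4 : (1+kk) * (1:R) * (1+kk) = (2:ℂ) • ((1:R) * (1+kk)) := by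
    have h : (1+kk) * (1:R) * (1+kk) = 1 + kk + kk + kk*kk := by noncomm_ring
    rw [h, hkk, two_smul]
    noncomm_ring
  have hs : (1+kk) * ((1/2:ℂ) • 1 + (Complex.I/2) • oa + (-(Complex.I/2)) • ao + (1/2:ℂ) • aa)
        * (1+kk) = (1 + aa) * (1+kk) := by
    have hsplit : ∀ v : R, v * ((1/2:ℂ) • 1 + (Complex.I/2) • oa + (-(Complex.I/2)) • ao
          + (1/2:ℂ) • aa) * v
        = (1/2:ℂ) • (v*1*v) + (Complex.I/2) • (v*oa*v) + (-(Complex.I/2)) • (v*ao*v)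
          + (1/2:ℂ) • (v*aa*v) := fun v => by
      simp only [mul_add, add_mul, mul_smul_comm, smul_mul_assoc]
    rw [hsplit, e1, e2, e3, e4, smul_zero, smul_zero, smul_smul, smul_smul,
      show (1/2:ℂ) * 2 = 1 by norm_num, one_smul, one_smul]
    noncomm_ring
  have grand : ((1/2:ℂ) • (1+zz)) * ((1/2:ℂ) • (1+kk)) *
      ((1/2:ℂ) • 1 + (Complex.I/2) • oa + (-(Complex.I/2)) • ao + (1/2:ℂ) • aa) *
      ((1/2:ℂ) • (1+kk)) =
      (1/8:ℂ) • ((1+zz) * ((1+kk) *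
        ((1/2:ℂ) • 1 + (Complex.I/2) • oa + (-(Complex.I/2)) • ao + (1/2:ℂ) • aa) * (1+kk))) := by
    simp only [smul_mul_assoc, mul_smul_comm, smul_smul]
    rw [mul_assoc (1+zz) (1+kk), mul_assoc (1+zz)]
    congr 1
    norm_num
  rw [grand, hs]
  have grand2 : ((1/2:ℂ) • (1+zz)) * ((1/2:ℂ) • (1+kk)) * ((1/2:ℂ) • (1+ss)) =
      (1/8:ℂ) • ((1+zz) * ((1+kk) * (1+ss))) := by
    simp only [smul_mul_assoc, mul_smul_comm, smul_smul]
    rw [mul_assoc (1+zz) (1+kk)]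
    congr 1
    norm_num
  rw [grand2]
  congr 1
  have hfact : (1+zz) * (1+aa) = (1+zz) * (1+ss) := by
    have l : (1+zz)*(1+aa) = 1 + zz + aa + zz*aa := by noncomm_ring
    have r : (1+zz)*(1+ss) = 1 + zz + ss + zz*ss := by noncomm_ring
    rw [l, r, hzaa, hzss]
    abel
  have hcm : (1+ss)*(1+kk) = (1+kk)*(1+ss) := by
    have l : (1+ss)*(1+kk) = 1 + ss + kk + ss*kk := by noncomm_ring
    have r : (1+kk)*(1+ss) = 1 + kk + ss + kk*ss := by noncomm_ring
    rw [l, r, hss]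
    abel
  rw [← mul_assoc, hfact, mul_assoc, hcm]

lemma pauliZZ : pauliZ * pauliZ = 1 := by
  ext i j
  fin_cases i <;> fin_cases j <;>
    norm_num [pauliZ, Matrix.mul_apply, Fin.sum_univ_two, Matrix.one_apply]

lemma pauliXX : pauliX * pauliX = 1 := by
  ext i j
  fin_cases i <;> fin_cases j <;>
    norm_num [pauliX, Matrix.mul_apply, Fin.sum_univ_two, Matrix.one_apply]

lemma pauliZX : pauliZ * pauliX = -(pauliX * pauliZ) := by
  ext i j
  fin_cases i <;> fin_cases j <;>
    norm_num [pauliX, pauliZ, Matrix.mul_apply, Fin.sum_univ_two]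

lemma GW_eq (t : ℕ) (M : Matrix (Fin 2) (Fin 2) ℂ) (k : ℤ) (hk : 1 ≤ k ∧ k ≤ (t:ℤ))
    (j : Fin t) (hj : (j : ℕ) = k.toNat - 1) :
    GW t M k = (1/2 : ℂ) • (1 + site M j ⊗ₖ site M j) := by
  rw [GW, dif_pos hk]
  have hjj : (⟨k.toNat - 1, by omega⟩ : Fin t) = j :=
    Fin.ext (by show k.toNat - 1 = (j:ℕ); omega)
  rw [hjj]

lemma JW_eq (t : ℕ) (k : ℤ) (hk : 1 ≤ k ∧ k + 1 ≤ (t:ℤ)) (j₁ j₂ : Fin t)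
    (h1 : (j₁ : ℕ) = k.toNat) (h2 : (j₂ : ℕ) = k.toNat - 1) :
    JW t k = mexp ((-Complex.I) • (((Real.pi / 4 : ℝ) : ℂ) •
        (site pauliZ j₁ * site pauliZ j₂))) ⊗ₖ
      mexp (Complex.I • (((Real.pi / 4 : ℝ) : ℂ) •
        (site pauliZ j₁ * site pauliZ j₂))) := by
  rw [JW, dif_pos hk]
  have e1 : (⟨k.toNat, by omega⟩ : Fin t) = j₁ :=
    Fin.ext (by show k.toNat = (j₁:ℕ); omega)
  have e2 : (⟨k.toNat - 1, by omega⟩ : Fin t) = j₂ :=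
    Fin.ext (by show k.toNat - 1 = (j₂:ℕ); omega)
  rw [e1, e2]

end GzAux

open GzAux in
/-- **Projector identity on the doubled chain:** for `2 ≤ τ ≤ t`,
`G^z_τ·G^x_τ·J_{τ−1}·G^x_τ = G^z_τ·G^x_τ·G^z_{τ−1}`. -/
theorem Gz_Gx_J_Gx (t : ℕ) (ht : 2 ≤ t) (τ : ℕ) (hτ1 : 2 ≤ τ) (hτ2 : τ ≤ t) :
    GW t pauliZ (τ : ℤ) * GW t pauliX (τ : ℤ) * JW t ((τ : ℤ) - 1) * GW t pauliX (τ : ℤ) =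
      GW t pauliZ (τ : ℤ) * GW t pauliX (τ : ℤ) * GW t pauliZ ((τ : ℤ) - 1) := by
  have hp : τ - 1 < t := by omega
  have hq : τ - 2 < t := by omega
  have htt : 1 ≤ (τ:ℤ) ∧ (τ:ℤ) ≤ (t:ℤ) := by omega
  have hjk : 1 ≤ (τ:ℤ) - 1 ∧ ((τ:ℤ) - 1) + 1 ≤ (t:ℤ) := by omega
  have hgk : 1 ≤ (τ:ℤ) - 1 ∧ (τ:ℤ) - 1 ≤ (t:ℤ) := by omega
  rw [GzAux.GW_eq t pauliZ (τ:ℤ) htt ⟨τ-1, hp⟩ (by show τ-1 = _; omega),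
      GzAux.GW_eq t pauliX (τ:ℤ) htt ⟨τ-1, hp⟩ (by show τ-1 = _; omega),
      GzAux.GW_eq t pauliZ ((τ:ℤ)-1) hgk ⟨τ-2, hq⟩ (by show τ-2 = _; omega),
      GzAux.JW_eq t ((τ:ℤ)-1) hjk ⟨τ-1, hp⟩ ⟨τ-2, hq⟩ (by show τ-1 = _; omega)
        (by show τ-2 = _; omega)]
  set P : QOp (Fin t) := site pauliZ (⟨τ-1, hp⟩ : Fin t) with hPd
  set Q : QOp (Fin t) := site pauliZ (⟨τ-2, hq⟩ : Fin t) with hQd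
  set X : QOp (Fin t) := site pauliX (⟨τ-1, hp⟩ : Fin t) with hXd
  have hpq : (⟨τ-1,hp⟩ : Fin t) ≠ (⟨τ-2,hq⟩ : Fin t) := by
    simp only [ne_eq, Fin.mk.injEq]; omega
  have f1 : X * X = 1 := by rw [hXd, GzAux.site_mul_same, GzAux.pauliXX, GzAux.site_one]
  have f2 : P * P = 1 := by rw [hPd, GzAux.site_mul_same, GzAux.pauliZZ, GzAux.site_one]
  have f4 : P * X = -(X * P) := by
    rw [hPd, hXd, GzAux.site_mul_same, GzAux.site_mul_same, GzAux.pauliZX, GzAux.site_neg]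
  have f4' : X * P = -(P * X) := by rw [f4, neg_neg]
  have f5 : X * Q = Q * X := by rw [hXd, hQd]; exact GzAux.site_comm _ _ hpq
  have hXA : X * (P * Q) = -((P * Q) * X) := by
    rw [← mul_assoc, f4', neg_mul, mul_assoc, f5, ← mul_assoc]
  have hA : P * Q = Matrix.diagonal
      (fun x : Fin t → Fin 2 => GzAux.zv (x ⟨τ-1,hp⟩) * GzAux.zv (x ⟨τ-2,hq⟩)) := by
    rw [hPd, hQd, GzAux.siteZ_diagonal, GzAux.siteZ_diagonal, Matrix.diagonal_mul_diagonal]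
  have hw : ∀ x : Fin t → Fin 2,
      (fun x : Fin t → Fin 2 => GzAux.zv (x ⟨τ-1,hp⟩) * GzAux.zv (x ⟨τ-2,hq⟩)) x = 1 ∨
      (fun x : Fin t → Fin 2 => GzAux.zv (x ⟨τ-1,hp⟩) * GzAux.zv (x ⟨τ-2,hq⟩)) x = -1 := by
    intro x
    unfold GzAux.zv
    dsimp only
    split_ifs <;> norm_num
  have hr2 : ((Real.sqrt 2 : ℝ) : ℂ) * ((Real.sqrt 2 : ℝ) : ℂ) = 2 := by
    rw [← Complex.ofReal_mul, Real.mul_self_sqrt (by norm_num)]; norm_num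
  have hc1 : Complex.cosh ((-Complex.I) * ((Real.pi/4 : ℝ):ℂ)) = ((Real.sqrt 2 / 2 : ℝ) : ℂ) := by
    rw [show (-Complex.I) * ((Real.pi/4:ℝ):ℂ) = -(((Real.pi/4:ℝ):ℂ) * Complex.I) by ring,
      Complex.cosh_neg, Complex.cosh_mul_I, ← Complex.ofReal_cos, Real.cos_pi_div_four]
  have hs1 : Complex.sinh ((-Complex.I) * ((Real.pi/4:ℝ):ℂ))
      = -(((Real.sqrt 2 / 2 : ℝ):ℂ) * Complex.I) := by
    rw [show (-Complex.I) * ((Real.pi/4:ℝ):ℂ) = -(((Real.pi/4:ℝ):ℂ) * Complex.I) by ring,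
      Complex.sinh_neg, Complex.sinh_mul_I, ← Complex.ofReal_sin, Real.sin_pi_div_four]
  have hc2 : Complex.cosh (Complex.I * ((Real.pi/4:ℝ):ℂ)) = ((Real.sqrt 2 / 2:ℝ):ℂ) := by
    rw [mul_comm, Complex.cosh_mul_I, ← Complex.ofReal_cos, Real.cos_pi_div_four]
  have hs2 : Complex.sinh (Complex.I * ((Real.pi/4:ℝ):ℂ)) = ((Real.sqrt 2 / 2:ℝ):ℂ) * Complex.I := by
    rw [mul_comm, Complex.sinh_mul_I, ← Complex.ofReal_sin, Real.sin_pi_div_four]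
  have hJ : mexp ((-Complex.I) • (((Real.pi/4:ℝ):ℂ) • (P * Q))) ⊗ₖ
        mexp (Complex.I • (((Real.pi/4:ℝ):ℂ) • (P * Q))) =
      (1/2:ℂ) • 1 + (Complex.I/2) • ((1 : QOp (Fin t)) ⊗ₖ (P*Q)) +
        (-(Complex.I/2)) • ((P*Q) ⊗ₖ (1 : QOp (Fin t))) + (1/2:ℂ) • ((P*Q) ⊗ₖ (P*Q)) := by
    rw [hA, smul_smul, smul_smul, GzAux.mexp_smul_diag _ _ hw, GzAux.mexp_smul_diag _ _ hw,
      hc1, hs1, hc2, hs2]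
    simp only [Matrix.add_kronecker, Matrix.kronecker_add, Matrix.smul_kronecker,
      Matrix.kronecker_smul, smul_smul, Matrix.one_kronecker_one]
    match_scalars
    · linear_combination hr2 / 4
    · linear_combination -(Complex.I * hr2 / 4)
    · linear_combination Complex.I * hr2 / 4
    · linear_combination (-Complex.I*Complex.I/4) * hr2 - (1/2) * Complex.I_mul_I
  rw [hJ]
  have hkk : (X ⊗ₖ X) * (X ⊗ₖ X) = 1 := by
    rw [← Matrix.mul_kronecker_mul, f1, Matrix.one_kronecker_one]
  have hzaa : (P ⊗ₖ P) * ((P*Q) ⊗ₖ (P*Q)) = Q ⊗ₖ Q := by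
    have h : P * (P * Q) = Q := by rw [← mul_assoc, f2, one_mul]
    rw [← Matrix.mul_kronecker_mul, h]
  have hzss : (P ⊗ₖ P) * (Q ⊗ₖ Q) = (P*Q) ⊗ₖ (P*Q) := by
    rw [← Matrix.mul_kronecker_mul]
  have hoa : (X ⊗ₖ X) * ((1 : QOp (Fin t)) ⊗ₖ (P*Q))
      = -(((1 : QOp (Fin t)) ⊗ₖ (P*Q)) * (X ⊗ₖ X)) := by
    rw [← Matrix.mul_kronecker_mul, ← Matrix.mul_kronecker_mul, mul_one, one_mul, hXA,
      GzAux.kron_neg]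
  have hao : (X ⊗ₖ X) * ((P*Q) ⊗ₖ (1 : QOp (Fin t)))
      = -(((P*Q) ⊗ₖ (1 : QOp (Fin t))) * (X ⊗ₖ X)) := by
    rw [← Matrix.mul_kronecker_mul, ← Matrix.mul_kronecker_mul, mul_one, one_mul, hXA,
      GzAux.neg_kron]
  have haakk : ((P*Q) ⊗ₖ (P*Q)) * (X ⊗ₖ X) = (X ⊗ₖ X) * ((P*Q) ⊗ₖ (P*Q)) := by
    rw [← Matrix.mul_kronecker_mul, ← Matrix.mul_kronecker_mul, hXA, GzAux.neg_kron,
      GzAux.kron_neg, neg_neg]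
  have hsskk : (Q ⊗ₖ Q) * (X ⊗ₖ X) = (X ⊗ₖ X) * (Q ⊗ₖ Q) := by
    rw [← Matrix.mul_kronecker_mul, ← Matrix.mul_kronecker_mul, ← f5]
  exact GzAux.key (P ⊗ₖ P) (X ⊗ₖ X) (Q ⊗ₖ Q) ((1 : QOp (Fin t)) ⊗ₖ (P*Q))
    ((P*Q) ⊗ₖ (1 : QOp (Fin t))) ((P*Q) ⊗ₖ (P*Q)) hkk hzaa hzss hoa hao haakk hsskk
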